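/- Let 1 ≤ r ≤ d, let Θ ∈ ℝ^{d×r} satisfy ΘᵀΘ = I_r, and let g : ℝ^r → ℝ be Lipschitz continuous with constant C, i.e., |g(y) − g(y′)| ≤ C‖y − y′‖ for all y, y′ ∈ ℝ^r. Let f(x) = g(Θᵀx) and suppose σ² = Var(f(X)) > 0 for X ~ N(0, I_d). Then the mean dimension of f satisfies ν(f) ≤ r·(C/σ)². -/

import Mathlib

open MeasureTheory ProbabilityTheory Real Filter

noncomputable section

/-- Standard Gaussian measure `N(0, I_d)` on `ℝ^d`. -/
def stdGaussian (d : ℕ) : Measure (Fin d → ℝ) :=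
  Measure.pi fun _ => gaussianReal 0 1

/-- Sobol' total index `τ̄²_j(f) = (1/2)·E[(f(X) − f(X_{−j}:Z_j))²]`. -/
def sobolTau (d : ℕ) (f : (Fin d → ℝ) → ℝ) (j : Fin d) : ℝ :=
  (1 / 2) * ∫ p : (Fin d → ℝ) × (Fin d → ℝ),
    (f p.1 - f (Function.update p.1 j (p.2 j))) ^ 2
      ∂((stdGaussian d).prod (stdGaussian d))

/-- Mean dimension `ν(f) = (Σ_j τ̄²_j(f)) / Var(f(X))`. -/
def meanDim (d : ℕ) (f : (Fin d → ℝ) → ℝ) : ℝ :=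
  (∑ j, sobolTau d f j) / variance f (stdGaussian d)

/-- Gaussian fractional absolute moment `M_η = 2^{η/2} Γ((η+1)/2) / √π`. -/
def Mmom (η : ℝ) : ℝ := 2 ^ (η / 2) / Real.sqrt π * Real.Gamma ((η + 1) / 2)

/-- Standard normal CDF `Φ`. -/
def Phi (t : ℝ) : ℝ := ((gaussianReal 0 1) (Set.Iic t)).toReal

/-- Standard normal density `φ`. -/
def gpdf (x : ℝ) : ℝ := Real.exp (-x ^ 2 / 2) / Real.sqrt (2 * π)


open Set
open scoped NNReal ENNReal

lemma aux_integral_sq_exp : ∫ x : ℝ, x ^ 2 * rexp (-(1/2) * x ^ 2) = Real.sqrt (2 * π) := by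
  have habs := integral_comp_abs (f := fun t : ℝ => t ^ 2 * rexp (-(1/2) * t ^ 2))
  simp only [sq_abs] at habs
  rw [habs]
  have h2 : ∫ x in Set.Ioi (0:ℝ), x ^ 2 * rexp (-(1/2) * x ^ 2)
      = ((1:ℝ)/2) ^ (-((2:ℝ) + 1) / 2) * (1 / 2) * Real.Gamma (((2:ℝ) + 1) / 2) := by
    have h := integral_rpow_mul_exp_neg_mul_rpow (p := 2) (q := 2) (b := 1/2)
      two_pos (by norm_num) (by norm_num)
    rw [← h]
    refine setIntegral_congr_fun measurableSet_Ioi (fun x hx => ?_)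
    rw [show (2:ℝ) = ((2:ℕ):ℝ) by norm_num, Real.rpow_natCast]
  rw [h2]
  have hG : Real.Gamma (((2:ℝ) + 1) / 2) = (1/2) * Real.sqrt π := by
    rw [show ((2:ℝ) + 1) / 2 = 1/2 + 1 by norm_num,
      Real.Gamma_add_one (by norm_num), Real.Gamma_one_half_eq]
  have hb : ((1:ℝ)/2) ^ (-((2:ℝ) + 1) / 2) = (2:ℝ) * Real.sqrt 2 := by
    rw [show ((1:ℝ)/2) = (2:ℝ)⁻¹ by norm_num,
      Real.inv_rpow (by norm_num), show (-((2:ℝ)+1)/2) = -(3/2 : ℝ) by norm_num,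
      Real.rpow_neg (by norm_num), inv_inv,
      show (3/2 : ℝ) = 1 + 1/2 by norm_num,
      Real.rpow_add (by norm_num), Real.rpow_one, ← Real.sqrt_eq_rpow]
  rw [hG, hb, Real.sqrt_mul (by norm_num)]
  ring

lemma aux_integral_odd : ∫ x : ℝ, x * rexp (-(1/2) * x ^ 2) = 0 := by
  have hi : Integrable (fun x : ℝ => x * rexp (-(1/2) * x ^ 2)) :=
    integrable_mul_exp_neg_mul_sq (by norm_num)
  have h := integral_comp_neg_Ioi (0:ℝ) (fun x : ℝ => x * rexp (-(1/2) * x ^ 2))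
  rw [neg_zero] at h
  have htot := integral_add_compl (measurableSet_Iic (a := (0:ℝ))) hi
  rw [Set.compl_Iic] at htot
  have h2 : ∫ x in Iic (0:ℝ), x * rexp (-(1/2) * x ^ 2)
      = -∫ x in Ioi (0:ℝ), x * rexp (-(1/2) * x ^ 2) := by
    rw [← h, ← integral_neg]
    refine setIntegral_congr_fun measurableSet_Ioi fun x hx => ?_
    simp [neg_sq]
  rw [← htot, h2]; ring

lemma gauss_pdf_eq (x : ℝ) :
    gaussianPDFReal 0 1 x = (Real.sqrt (2 * π))⁻¹ * rexp (-(1/2) * x ^ 2) := by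
  simp only [gaussianPDFReal, NNReal.coe_one, mul_one, sub_zero]
  rw [show -x ^ 2 / 2 = -(1/2) * x ^ 2 by ring]

lemma integral_gaussianReal_eq (h : ℝ → ℝ) :
    ∫ x, h x ∂(gaussianReal 0 1) = ∫ x, gaussianPDFReal 0 1 x * h x := by
  rw [gaussianReal_of_var_ne_zero 0 one_ne_zero]
  have e : gaussianPDF 0 1 = fun x => ((Real.toNNReal (gaussianPDFReal 0 1 x) : ℝ≥0) : ℝ≥0∞) := rfl
  rw [e, integral_withDensity_eq_integral_smul
    ((measurable_gaussianPDFReal 0 1).real_toNNReal) h]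
  refine integral_congr_ae (Filter.Eventually.of_forall fun x => ?_)
  simp [NNReal.smul_def, Real.coe_toNNReal _ (gaussianPDFReal_nonneg 0 1 x)]

lemma integrable_gaussianReal_iff (h : ℝ → ℝ) :
    Integrable h (gaussianReal 0 1)
      ↔ Integrable (fun x => gaussianPDFReal 0 1 x * h x) volume := by
  rw [gaussianReal_of_var_ne_zero 0 one_ne_zero]
  have e : gaussianPDF 0 1 = fun x => ((Real.toNNReal (gaussianPDFReal 0 1 x) : ℝ≥0) : ℝ≥0∞) := rfl
  rw [e, integrable_withDensity_iff_integrable_smul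
    ((measurable_gaussianPDFReal 0 1).real_toNNReal)]
  refine integrable_congr (Filter.Eventually.of_forall fun x => ?_)
  simp [NNReal.smul_def, Real.coe_toNNReal _ (gaussianPDFReal_nonneg 0 1 x)]

lemma sqrt_two_pi_pos : (0:ℝ) < Real.sqrt (2 * π) :=
  Real.sqrt_pos.mpr (by positivity)

lemma integrable_sq_gauss : Integrable (fun x : ℝ => x ^ 2) (gaussianReal 0 1) := by
  rw [integrable_gaussianReal_iff]
  have hI : Integrable (fun x : ℝ => x ^ 2 * rexp (-(1/2) * x ^ 2)) := by
    have h := integrable_rpow_mul_exp_neg_mul_sq (b := 1/2) (by norm_num) (s := 2) (by norm_num)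
    refine h.congr (Filter.Eventually.of_forall fun x => ?_)
    have e2 : x ^ (2:ℝ) = x ^ (2:ℕ) := by
      rw [show (2:ℝ) = ((2:ℕ):ℝ) by norm_num, Real.rpow_natCast]
    simp only [e2]
  refine (hI.const_mul ((Real.sqrt (2 * π))⁻¹)).congr
    (Filter.Eventually.of_forall fun x => ?_)
  simp only [gauss_pdf_eq]; ring

lemma integrable_id_gauss : Integrable (fun x : ℝ => x) (gaussianReal 0 1) := by
  rw [integrable_gaussianReal_iff]
  have hI : Integrable (fun x : ℝ => x * rexp (-(1/2) * x ^ 2)) :=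
    integrable_mul_exp_neg_mul_sq (by norm_num)
  refine (hI.const_mul ((Real.sqrt (2 * π))⁻¹)).congr
    (Filter.Eventually.of_forall fun x => ?_)
  simp only [gauss_pdf_eq]; ring

lemma integral_sq_gauss : ∫ x, x ^ 2 ∂(gaussianReal 0 1) = 1 := by
  rw [integral_gaussianReal_eq]
  have e : (fun x : ℝ => gaussianPDFReal 0 1 x * x ^ 2)
      = fun x => (Real.sqrt (2 * π))⁻¹ * (x ^ 2 * rexp (-(1/2) * x ^ 2)) := by
    funext x; rw [gauss_pdf_eq]; ring
  rw [e, integral_const_mul, aux_integral_sq_exp, inv_mul_cancel₀ sqrt_two_pi_pos.ne']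

lemma integral_id_gauss : ∫ x, x ∂(gaussianReal 0 1) = 0 := by
  rw [integral_gaussianReal_eq]
  have e : (fun x : ℝ => gaussianPDFReal 0 1 x * x)
      = fun x => (Real.sqrt (2 * π))⁻¹ * (x * rexp (-(1/2) * x ^ 2)) := by
    funext x; rw [gauss_pdf_eq]; ring
  rw [e, integral_const_mul, aux_integral_odd, mul_zero]

instance (d : ℕ) : IsProbabilityMeasure (stdGaussian d) := by
  unfold _root_.stdGaussian; infer_instance

lemma stdGaussian_map_eval (d : ℕ) (j : Fin d) :
    (stdGaussian d).map (fun x => x j) = gaussianReal 0 1 := by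
  refine Measure.ext fun s hs => ?_
  rw [Measure.map_apply (measurable_pi_apply j) hs]
  have e : (fun x : Fin d → ℝ => x j) ⁻¹' s
      = Set.pi Set.univ (fun i => if i = j then s else Set.univ) := by
    ext x
    simp only [Set.mem_preimage, Set.mem_pi, Set.mem_univ, forall_true_left]
    constructor
    · intro hx i
      by_cases h : i = j
      · subst h; simpa using hx
      · simp [h]
    · intro hx
      have := hx j
      simpa using this
  rw [e, _root_.stdGaussian, Measure.pi_pi]
  rw [Finset.prod_eq_single j (fun i _ hij => by simp [hij]) (by simp)]
  simp

lemma integrable_eval_sq (d : ℕ) (j : Fin d) :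
    Integrable (fun x : Fin d → ℝ => (x j) ^ 2) (stdGaussian d) := by
  have h := integrable_sq_gauss
  rw [← stdGaussian_map_eval d j] at h
  exact (integrable_map_measure ((measurable_id.pow_const 2).aestronglyMeasurable)
    (measurable_pi_apply j).aemeasurable).mp h

lemma integrable_eval (d : ℕ) (j : Fin d) :
    Integrable (fun x : Fin d → ℝ => x j) (stdGaussian d) := by
  have h := integrable_id_gauss
  rw [← stdGaussian_map_eval d j] at h
  exact (integrable_map_measure measurable_id'.aestronglyMeasurable
    (measurable_pi_apply j).aemeasurable).mp h

lemma integral_eval_sq (d : ℕ) (j : Fin d) :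
    ∫ x, (x j) ^ 2 ∂(stdGaussian d) = 1 := by
  rw [← integral_sq_gauss, ← stdGaussian_map_eval d j,
    integral_map (measurable_pi_apply j).aemeasurable (by fun_prop)]

lemma integral_eval (d : ℕ) (j : Fin d) :
    ∫ x, x j ∂(stdGaussian d) = 0 := by
  rw [← integral_id_gauss, ← stdGaussian_map_eval d j,
    integral_map ((measurable_pi_apply j : Measurable fun x : Fin d → ℝ => x j)).aemeasurable
      measurable_id'.aestronglyMeasurable]

lemma integrable_diff_sq (d : ℕ) (j : Fin d) :
    Integrable (fun p : (Fin d → ℝ) × (Fin d → ℝ) => (p.1 j - p.2 j) ^ 2)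
      ((stdGaussian d).prod (stdGaussian d)) := by
  have hA : Integrable (fun p : (Fin d → ℝ) × (Fin d → ℝ) => (p.1 j) ^ 2 * 1)
      ((stdGaussian d).prod (stdGaussian d)) :=
    (integrable_eval_sq d j).mul_prod (integrable_const (μ := stdGaussian d) (1:ℝ))
  have hB : Integrable (fun p : (Fin d → ℝ) × (Fin d → ℝ) => p.1 j * p.2 j)
      ((stdGaussian d).prod (stdGaussian d)) :=
    (integrable_eval d j).mul_prod (integrable_eval d j)
  have hC : Integrable (fun p : (Fin d → ℝ) × (Fin d → ℝ) => 1 * (p.2 j) ^ 2)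
      ((stdGaussian d).prod (stdGaussian d)) :=
    (integrable_const (μ := stdGaussian d) (1:ℝ)).mul_prod (integrable_eval_sq d j)
  refine ((hA.sub (hB.const_mul 2)).add hC).congr
    (Filter.Eventually.of_forall fun p => ?_)
  simp only [Pi.add_apply, Pi.sub_apply]
  ring

lemma integral_diff_sq (d : ℕ) (j : Fin d) :
    ∫ p : (Fin d → ℝ) × (Fin d → ℝ), (p.1 j - p.2 j) ^ 2
      ∂((stdGaussian d).prod (stdGaussian d)) = 2 := by
  have hA : Integrable (fun p : (Fin d → ℝ) × (Fin d → ℝ) => (p.1 j) ^ 2 * 1)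
      ((stdGaussian d).prod (stdGaussian d)) :=
    (integrable_eval_sq d j).mul_prod (integrable_const (μ := stdGaussian d) (1:ℝ))
  have hB : Integrable (fun p : (Fin d → ℝ) × (Fin d → ℝ) => 2 * (p.1 j * p.2 j))
      ((stdGaussian d).prod (stdGaussian d)) :=
    ((integrable_eval d j).mul_prod (integrable_eval d j)).const_mul 2
  have hC : Integrable (fun p : (Fin d → ℝ) × (Fin d → ℝ) => 1 * (p.2 j) ^ 2)
      ((stdGaussian d).prod (stdGaussian d)) :=
    (integrable_const (μ := stdGaussian d) (1:ℝ)).mul_prod (integrable_eval_sq d j)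
  have h1 : Integrable (fun p : (Fin d → ℝ) × (Fin d → ℝ) =>
      (p.1 j) ^ 2 * 1 - 2 * (p.1 j * p.2 j)) ((stdGaussian d).prod (stdGaussian d)) :=
    hA.sub hB
  have e : (fun p : (Fin d → ℝ) × (Fin d → ℝ) => (p.1 j - p.2 j) ^ 2)
      = fun p => ((p.1 j) ^ 2 * 1 - 2 * (p.1 j * p.2 j)) + 1 * (p.2 j) ^ 2 := by
    funext p; ring
  rw [e, integral_add h1 hC, integral_sub hA hB, integral_const_mul,
    integral_prod_mul (fun x : Fin d → ℝ => (x j) ^ 2) (fun _ : Fin d → ℝ => (1:ℝ)),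
    integral_prod_mul (fun x : Fin d → ℝ => x j) (fun x : Fin d → ℝ => x j),
    integral_prod_mul (fun _ : Fin d → ℝ => (1:ℝ)) (fun x : Fin d → ℝ => (x j) ^ 2),
    integral_eval_sq, integral_eval, integral_const]
  simp
  norm_num

/-- Corollary 3.2 (Lipschitz ridge functions): `ν(f) ≤ r (C/σ)²`. -/
theorem stmt1 (d r : ℕ) (hr : 1 ≤ r) (hrd : r ≤ d)
    (Θ : Matrix (Fin d) (Fin r) ℝ) (hΘ : Θ.transpose * Θ = 1)
    (g : (Fin r → ℝ) → ℝ) (C : ℝ)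
    (hg : ∀ y y' : Fin r → ℝ,
      |g y - g y'| ≤ C * Real.sqrt (∑ k, (y k - y' k) ^ 2))
    (f : (Fin d → ℝ) → ℝ) (hf : ∀ x, f x = g (fun k => ∑ j, Θ j k * x j))
    (hσ : 0 < variance f (stdGaussian d)) :
    meanDim d f ≤ r * (C / Real.sqrt (variance f (stdGaussian d))) ^ 2 := by
  have hC : 0 ≤ C := by
    have h0 : (0:ℕ) < r := hr
    set j0 : Fin r := ⟨0, h0⟩
    have h := hg (fun _ => 0) (fun k => if k = j0 then 1 else 0)
    have hs : ∑ k : Fin r, ((fun _ => (0:ℝ)) k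
        - (fun k => if k = j0 then (1:ℝ) else 0) k) ^ 2 = 1 := by
      have e : ∀ k : Fin r, ((fun _ => (0:ℝ)) k
          - (fun k => if k = j0 then (1:ℝ) else 0) k) ^ 2 = if k = j0 then 1 else 0 := by
        intro k; by_cases hk : k = j0 <;> simp [hk]
      rw [Finset.sum_congr rfl fun k _ => e k,
        Finset.sum_ite_eq' Finset.univ j0 (fun _ => (1:ℝ))]
      simp
    rw [hs, Real.sqrt_one, mul_one] at h
    exact le_trans (abs_nonneg _) h
  set s : Fin d → ℝ := fun j => ∑ k, Θ j k ^ 2 with hs_def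
  have hs_nonneg : ∀ j, 0 ≤ s j := fun j => Finset.sum_nonneg fun k _ => sq_nonneg _
  have hsum_s : ∑ j, s j = (r : ℝ) := by
    rw [hs_def, Finset.sum_comm]
    have hk : ∀ k : Fin r, ∑ j, Θ j k ^ 2 = 1 := by
      intro k
      have h1 : (Θ.transpose * Θ) k k = (1 : Matrix (Fin r) (Fin r) ℝ) k k := by rw [hΘ]
      simpa [Matrix.mul_apply, Matrix.transpose_apply, Matrix.one_apply_eq, pow_two] using h1
    simp [hk]
  have hpt : ∀ (j : Fin d) (x : Fin d → ℝ) (z : ℝ),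
      (f x - f (Function.update x j z)) ^ 2 ≤ C ^ 2 * s j * (x j - z) ^ 2 := by
    intro j x z
    rw [hf, hf]
    set y : Fin r → ℝ := fun k => ∑ i, Θ i k * x i with hy
    set y' : Fin r → ℝ := fun k => ∑ i, Θ i k * Function.update x j z i with hy'
    have hd2 : ∀ k, y k - y' k = Θ j k * (x j - z) := by
      intro k
      rw [hy, hy']
      simp only
      rw [← Finset.sum_sub_distrib, Finset.sum_eq_single j]
      · rw [Function.update_self]; ring
      · intro i _ hij; rw [Function.update_of_ne hij]; ring
      · intro habs; exact absurd (Finset.mem_univ j) habs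
    have h1 := hg y y'
    have hsum : (∑ k, (y k - y' k) ^ 2) = s j * (x j - z) ^ 2 := by
      rw [Finset.sum_congr rfl fun k _ => by rw [hd2 k]]
      simp_rw [mul_pow]
      rw [← Finset.sum_mul]
    rw [hsum, Real.sqrt_mul (hs_nonneg j), Real.sqrt_sq_eq_abs] at h1
    have h2 : |g y - g y'| ^ 2 ≤ (C * (Real.sqrt (s j) * |x j - z|)) ^ 2 :=
      pow_le_pow_left₀ (abs_nonneg _) h1 2
    calc (g y - g y') ^ 2 = |g y - g y'| ^ 2 := (sq_abs _).symm
      _ ≤ (C * (Real.sqrt (s j) * |x j - z|)) ^ 2 := h2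
      _ = C ^ 2 * s j * (x j - z) ^ 2 := by
          rw [mul_pow, mul_pow, Real.sq_sqrt (hs_nonneg j), sq_abs]; ring
  have htau : ∀ j, sobolTau d f j ≤ C ^ 2 * s j := by
    intro j
    have hdom := (integrable_diff_sq d j).const_mul (C ^ 2 * s j)
    have hint : (∫ p : (Fin d → ℝ) × (Fin d → ℝ),
        (f p.1 - f (Function.update p.1 j (p.2 j))) ^ 2
          ∂((stdGaussian d).prod (stdGaussian d)))
        ≤ ∫ p : (Fin d → ℝ) × (Fin d → ℝ), C ^ 2 * s j * (p.1 j - p.2 j) ^ 2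
          ∂((stdGaussian d).prod (stdGaussian d)) := by
      refine integral_mono_of_nonneg (Filter.Eventually.of_forall fun p => sq_nonneg _)
        hdom (Filter.Eventually.of_forall fun p => ?_)
      exact hpt j p.1 (p.2 j)
    have hval : (∫ p : (Fin d → ℝ) × (Fin d → ℝ), C ^ 2 * s j * (p.1 j - p.2 j) ^ 2
        ∂((stdGaussian d).prod (stdGaussian d))) = C ^ 2 * s j * 2 := by
      rw [integral_const_mul, integral_diff_sq d j]
    rw [sobolTau]
    calc (1/2 : ℝ) * ∫ p : (Fin d → ℝ) × (Fin d → ℝ),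
          (f p.1 - f (Function.update p.1 j (p.2 j))) ^ 2
            ∂((stdGaussian d).prod (stdGaussian d))
        ≤ (1/2 : ℝ) * (C ^ 2 * s j * 2) :=
          mul_le_mul_of_nonneg_left (hint.trans_eq hval) (by norm_num)
      _ = C ^ 2 * s j := by ring
  have hsum_tau : ∑ j, sobolTau d f j ≤ C ^ 2 * r := by
    calc ∑ j, sobolTau d f j ≤ ∑ j, C ^ 2 * s j := Finset.sum_le_sum fun j _ => htau j
      _ = C ^ 2 * ∑ j, s j := by rw [Finset.mul_sum]
      _ = C ^ 2 * r := by rw [hsum_s]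
  rw [meanDim]
  have hrw : (r:ℝ) * (C / Real.sqrt (variance f (stdGaussian d))) ^ 2
      = (C ^ 2 * r) / variance f (stdGaussian d) := by
    rw [div_pow, Real.sq_sqrt hσ.le]; ring
  rw [hrw]
  exact (div_le_div_iff_of_pos_right hσ).mpr hsum_tau

end
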